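/- Let κ > 1, s = 1/κ, ω = 1 − √(2κ−1)/κ, and β = (2κ − √(2κ−1) − 1)/(2(κ + √(2κ−1))). Then the symmetric 3×3 matrix P with entries a = −(1/β + 2)ω + 2(β+2) + β(s−1)/ω − 2(β+1)s, b = ((2β+1)(s−1) + ω)/2, c = β − ω(s+ω−1)/(2β(s−1)) − (β+1)s − ω + 1, d = (1−s)β, e = ω − (1−s)β, f = ω²/(β(1−s)), i.e. P = [[a, b, c], [b, d, e], [c, e, f]], is positive definite. -/

import Mathlib

set_option maxHeartbeats 1000000


open Matrix

/-- The symmetric matrix `P` with entries given by equations (9)-(14) of the paper. -/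
noncomputable def Pmat (s β ω : ℝ) : Matrix (Fin 3) (Fin 3) ℝ :=
  !![-(1/β+2)*ω + 2*(β+2) + β*(s-1)/ω - 2*(β+1)*s,
     ((2*β+1)*(s-1) + ω)/2,
     β - ω*(s+ω-1)/(2*β*(s-1)) - (β+1)*s - ω + 1;
     ((2*β+1)*(s-1) + ω)/2,
     (1-s)*β,
     ω - (1-s)*β;
     β - ω*(s+ω-1)/(2*β*(s-1)) - (β+1)*s - ω + 1,
     ω - (1-s)*β,
     ω^2/(β*(1-s))]

/-- Theorem 4 of the paper: for the optimal choices `ω = 1 − √(2κ−1)/κ` and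
`β = (2κ − √(2κ−1) − 1)/(2(κ + √(2κ−1)))`, the matrix `P` is positive definite. -/
theorem stmt9 (κ ω β : ℝ) (hκ : 1 < κ)
    (hω : ω = 1 - Real.sqrt (2*κ - 1)/κ)
    (hβ : β = (2*κ - Real.sqrt (2*κ - 1) - 1)/(2*(κ + Real.sqrt (2*κ - 1)))) :
    (Pmat (1/κ) β ω).PosDef := by
  set r := Real.sqrt (2*κ - 1) with hrdef
  have hr2 : r^2 = 2*κ - 1 := Real.sq_sqrt (by linarith)
  have hr1 : 1 < r := by
    nlinarith [Real.sqrt_nonneg (2*κ - 1), hr2]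
  have hr0 : 0 < r := by linarith
  clear_value r
  have hκr : κ = (r^2 + 1)/2 := by rw [hr2]; ring
  -- clean forms of ω and β
  have hωr : ω = (r-1)^2/(r^2+1) := by
    rw [hω, hκr]; field_simp; ring
  have hβr : β = (r*(r-1))/((r+1)^2) := by
    rw [hβ, hκr]; field_simp; ring
  have hrm1 : (0:ℝ) < r - 1 := by linarith
  have hω0 : 0 < ω := by rw [hωr]; positivity
  have hβ0 : 0 < β := by rw [hβr]; positivity
  have hκ0 : (0:ℝ) < κ := by linarith
  have hs : (1:ℝ)/κ = 2/(r^2+1) := by rw [hκr]; field_simp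
  have hs1 : (1:ℝ)/κ - 1 < 0 := by
    have : (1:ℝ)/κ < 1 := by rw [div_lt_one hκ0]; linarith
    linarith
  constructor
  · -- Hermitian
    ext i j
    fin_cases i <;> fin_cases j <;>
      simp [Pmat, Matrix.conjTranspose_apply]
  · intro x hx
    have hQ : dotProduct (star x) (Pmat (1/κ) β ω *ᵥ x) =
        ((-(1/β+2)*ω + 2*(β+2) + β*((1/κ)-1)/ω - 2*(β+1)*(1/κ)) * (x 0)^2
        + (1-(1/κ))*β * (x 1)^2 + ω^2/(β*(1-(1/κ))) * (x 2)^2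
        + 2*(((2*β+1)*((1/κ)-1) + ω)/2) * (x 0) * (x 1)
        + 2*(β - ω*((1/κ)+ω-1)/(2*β*((1/κ)-1)) - (β+1)*(1/κ) - ω + 1) * (x 0) * (x 2)
        + 2*(ω - (1-(1/κ))*β) * (x 1) * (x 2)) := by
      simp [Pmat, dotProduct, Matrix.mulVec, Fin.sum_univ_three]
      ring
    set Q := dotProduct (star x) (Pmat (1/κ) β ω *ᵥ x) with hQdef
    -- key SOS identity with denominators cleared
    have hne1 : r + 1 ≠ 0 := by positivity
    have hne2 : r^2 + 1 ≠ 0 := by positivity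
    have hne3 : r ≠ 0 := ne_of_gt hr0
    have hneω : ω ≠ 0 := ne_of_gt hω0
    have hneβ : β ≠ 0 := ne_of_gt hβ0
    have hneκ : κ ≠ 0 := ne_of_gt hκ0
    have hnes : (1:ℝ)/κ - 1 ≠ 0 := ne_of_lt hs1
    have hne4 : r - 1 ≠ 0 := by linarith
    have hne5 : (2:ℝ)/(r^2+1) - 1 ≠ 0 := by
      have h2 : (2:ℝ)/(r^2+1) < 1 := by
        rw [div_lt_one (by positivity)]; nlinarith
      linarith
    have hne6 : (1:ℝ) - r^2 ≠ 0 := by nlinarith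
    have hne7 : r^2 - 1 ≠ 0 := by nlinarith
    have hne8 : (1:ℝ) - r ≠ 0 := by linarith
    have hne9 : (1:ℝ) + r ≠ 0 := by linarith
    have ha : -(1/β+2)*ω + 2*(β+2) + β*((1/κ)-1)/ω - 2*(β+1)*(1/κ)
        = (2*r^2+1)/(r*(r+1)) := by
      rw [hωr, hβr, hs]; field_simp; ring
    have hb : ((2*β+1)*((1/κ)-1) + ω)/2 = (1-r)/(1+r) := by
      rw [hωr, hβr, hs]; field_simp; ring
    have hq1 : ω*((1/κ)+ω-1)/(2*β*((1/κ)-1)) = (r^2-1)/(r*(r^2+1)) := by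
      rw [div_eq_div_iff (mul_ne_zero (mul_ne_zero two_ne_zero hneβ) hnes)
        (by positivity)]
      rw [hωr, hβr, hs]; field_simp; ring
    have hc : β - ω*((1/κ)+ω-1)/(2*β*((1/κ)-1)) - (β+1)*(1/κ) - ω + 1
        = (r-1)^2*(r^2+r+1)/(r*(r+1)*(r^2+1)) := by
      rw [hq1, hωr, hβr, hs]; field_simp; ring
    have hd : (1-(1/κ))*β = r*(r-1)^2/((r+1)*(r^2+1)) := by
      rw [hβr, hs]; field_simp; ring
    have he : ω - (1-(1/κ))*β = (r-1)^2/((r+1)*(r^2+1)) := by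
      rw [hωr, hβr, hs]; field_simp; ring
    have hf : ω^2/(β*(1-(1/κ))) = (r-1)^2*(r+1)/(r*(r^2+1)) := by
      have hne10 : β*(1-(1/κ)) ≠ 0 := by
        apply mul_ne_zero hneβ
        intro h; apply hnes; linarith
      rw [div_eq_div_iff hne10 (by positivity)]
      rw [hωr, hβr, hs]; field_simp; ring
    rw [ha, hb, hc, he, hf, hd] at hQ
    have key : (r*(r+1)*(r^2+1)^2*(2*r^2+1)) * Q =
        ((2*r^2+1)*(r^2+1)*(x 0) + r*(1-r)*(r^2+1)*(x 1) + (r-1)^2*(r^2+r+1)*(x 2))^2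
        + (r^2+1) * (r*(r-1)*(r*(x 1) + (r+2)*(x 2)))^2
        + 2*r*(2*r^2+1)*(r-1)^2*(x 2)^2 := by
      rw [hQ]
      field_simp
      ring
    have hD : (0:ℝ) < r*(r+1)*(r^2+1)^2*(2*r^2+1) := by positivity
    -- the RHS is positive since x ≠ 0
    have hx' : ¬ (x 0 = 0 ∧ x 1 = 0 ∧ x 2 = 0) := by
      intro ⟨h0, h1, h2⟩
      apply hx
      ext i; fin_cases i <;> simp [h0, h1, h2]
    have hRHS : 0 < (r*(r+1)*(r^2+1)^2*(2*r^2+1)) * Q := by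
      rw [key]
      set S1 := (2*r^2+1)*(r^2+1)*(x 0) + r*(1-r)*(r^2+1)*(x 1)
        + (r-1)^2*(r^2+r+1)*(x 2) with hS1
      set S2 := r*(r-1)*(r*(x 1) + (r+2)*(x 2)) with hS2
      have hA : 0 ≤ S1^2 := sq_nonneg _
      have hB : 0 ≤ (r^2+1)*S2^2 := by positivity
      have hC : 0 ≤ 2*r*(2*r^2+1)*(r-1)^2*(x 2)^2 := by positivity
      by_cases h2 : x 2 = 0
      · by_cases h1 : x 1 = 0
        · have h0 : x 0 ≠ 0 := by tauto
          have hS1ne : S1 ≠ 0 := by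
            rw [hS1, h1, h2]
            simpa using mul_ne_zero (mul_ne_zero (by positivity : (2*r^2+1:ℝ) ≠ 0)
              (by positivity : (r^2+1:ℝ) ≠ 0)) h0
          have := sq_pos_of_ne_zero hS1ne
          linarith
        · have hS2ne : S2 ≠ 0 := by
            rw [hS2, h2]
            simpa using mul_ne_zero (mul_ne_zero hne3 hne4) (mul_ne_zero hne3 h1)
          have : 0 < (r^2+1)*S2^2 :=
            mul_pos (by positivity) (sq_pos_of_ne_zero hS2ne)
          linarith
      · have : 0 < 2*r*(2*r^2+1)*(r-1)^2*(x 2)^2 :=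
          mul_pos (by positivity) (sq_pos_of_ne_zero h2)
        linarith
    by_contra h
    push_neg at h
    have hQx : (x.sum fun i xi => x.sum fun j xj => star xi * Pmat (1/κ) β ω i j * xj) = Q := by
      rw [hQdef]; simp [Finsupp.sum_fintype, dotProduct, Matrix.mulVec, Fin.sum_univ_three]; ring
    rw [hQx] at h
    nlinarith [mul_nonpos_of_nonneg_of_nonpos (le_of_lt hD) h]
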